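/- Let ρ ∈ Matrix (Fin d) (Fin d) ℂ be positive definite with trace 1, and let A be a measurement with n outcomes on ℂ^d all of whose effects are nonzero. Then the trace of F_ρ(A), which equals the real number ∑ x, tr(ρ * A x * A x) / tr(ρ * A x), is at most d; moreover it equals d if and only if every effect A x has matrix rank equal to 1. -/

import Mathlib

open Matrix
open scoped Kronecker ComplexOrder

noncomputable section

/-- A measurement (POVM): a finite family of positive semidefinite matrices summing to `1`. -/
def IsMeasurement {ι κ : Type*} [Fintype ι] [DecidableEq ι] [Fintype κ]
    (A : κ → Matrix ι ι ℂ) : Prop :=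
  (∀ x, (A x).PosSemidef) ∧ ∑ x, A x = 1

/-- `A` is a post-processing of `B`: `A ⪯ B`. -/
def PostProc {ι : Type*} {n m : ℕ}
    (A : Fin n → Matrix ι ι ℂ) (B : Fin m → Matrix ι ι ℂ) : Prop :=
  ∃ μ : Fin n → Fin m → ℝ,
    (∀ x y, 0 ≤ μ x y) ∧ (∀ y, ∑ x, μ x y = 1) ∧
    (∀ x, A x = ∑ y, (μ x y : ℂ) • B y)

/-- The outer product `|E⟩⟨F|` of the vectorizations of two matrices. -/
def outerProd {ι : Type*} (E F : Matrix ι ι ℂ) : Matrix (ι × ι) (ι × ι) ℂ :=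
  Matrix.of fun p q => E p.1 p.2 * star (F q.1 q.2)

/-- The (un-normalized) Fisher information map of a measurement. -/
noncomputable def Fisher {ι κ : Type*} [Fintype ι] [Fintype κ]
    (A : κ → Matrix ι ι ℂ) : Matrix (ι × ι) (ι × ι) ℂ :=
  ∑ x, (Matrix.trace (A x))⁻¹ • outerProd (A x) (A x)

/-- The old `Matrix.PosSemidef.sqrt`, spelled out. -/
noncomputable def psdSqrt {ι : Type*} [Fintype ι] [DecidableEq ι] {M : Matrix ι ι ℂ}
    (hM : M.PosSemidef) : Matrix ι ι ℂ :=
  (hM.1.eigenvectorUnitary : Matrix ι ι ℂ) *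
    diagonal (fun i => ((Real.sqrt (hM.1.eigenvalues i) : ℝ) : ℂ)) *
    (star hM.1.eigenvectorUnitary : Matrix ι ι ℂ)

/-- The generalized Fisher information map of a measurement, relative to a
positive definite state `ρ` (with positive semidefinite square root `ρ^{1/2}`). -/
noncomputable def FisherRho {ι κ : Type*} [Fintype ι] [DecidableEq ι] [Fintype κ]
    {ρ : Matrix ι ι ℂ} (hρ : ρ.PosDef) (A : κ → Matrix ι ι ℂ) :
    Matrix (ι × ι) (ι × ι) ℂ :=
  ∑ x, (Matrix.trace (ρ * A x))⁻¹ •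
    outerProd (psdSqrt hρ.posSemidef * A x) (psdSqrt hρ.posSemidef * A x)

/-- The height of a finite family of self-adjoint matrices: the infimum of the traces of
Hermitian matrices dominating every member in the Loewner order. -/
noncomputable def height {ι κ : Type*} [Fintype ι] [Fintype κ]
    (X : κ → Matrix ι ι ℂ) : ℝ :=
  sInf { t : ℝ | ∃ H : Matrix ι ι ℂ, H.IsHermitian ∧
    (∀ i, (H - X i).PosSemidef) ∧ t = (Matrix.trace H).re }

section Stmt6Helpers
variable {d : ℕ}

lemma traceBB (B : Matrix (Fin d) (Fin d) ℂ) :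
    Matrix.trace (Bᴴ * B) = ((∑ j, ∑ i, Complex.normSq (B i j) : ℝ) : ℂ) := by
  simp [Matrix.trace, Matrix.mul_apply, Matrix.diag, conjTranspose_apply,
    Complex.normSq_eq_conj_mul_self]

lemma psdSqrt_psd {M : Matrix (Fin d) (Fin d) ℂ} (hM : M.PosSemidef) :
    (psdSqrt hM).PosSemidef := by
  unfold psdSqrt
  have := (posSemidef_diagonal_iff.mpr (fun i => Complex.zero_le_real.mpr
    (Real.sqrt_nonneg (hM.1.eigenvalues i)))).mul_mul_conjTranspose_same
    (hM.1.eigenvectorUnitary : Matrix (Fin d) (Fin d) ℂ)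
  simpa only [Unitary.coe_star, Matrix.star_eq_conjTranspose] using this

lemma psdSqrt_mul_self {M : Matrix (Fin d) (Fin d) ℂ} (hM : M.PosSemidef) :
    psdSqrt hM * psdSqrt hM = M := by
  unfold psdSqrt
  set U : Matrix (Fin d) (Fin d) ℂ := (hM.1.eigenvectorUnitary : Matrix (Fin d) (Fin d) ℂ)
  have hU : star U * U = 1 := Unitary.coe_star_mul_self _
  rw [show U * diagonal (fun i => ((Real.sqrt (hM.1.eigenvalues i) : ℝ) : ℂ)) * star U *
      (U * diagonal (fun i => ((Real.sqrt (hM.1.eigenvalues i) : ℝ) : ℂ)) * star U)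
      = U * diagonal (fun i => ((Real.sqrt (hM.1.eigenvalues i) : ℝ) : ℂ)) * (star U * U) *
        diagonal (fun i => ((Real.sqrt (hM.1.eigenvalues i) : ℝ) : ℂ)) * star U by
      simp only [Matrix.mul_assoc], hU, Matrix.mul_one, Matrix.mul_assoc U,
    diagonal_mul_diagonal]
  have hs := hM.1.spectral_theorem
  rw [Unitary.conjStarAlgAut_apply] at hs
  refine Eq.trans ?_ hs.symm
  congr 2
  congr 1
  funext i
  simp [← Complex.ofReal_mul, Real.mul_self_sqrt (hM.eigenvalues_nonneg i)]

lemma psd_trace_re {N : Matrix (Fin d) (Fin d) ℂ} (hN : N.PosSemidef) :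
    Matrix.trace N = ((Matrix.trace N).re : ℂ) ∧ 0 ≤ (Matrix.trace N).re := by
  obtain ⟨B, rfl⟩ : ∃ B : Matrix (Fin d) (Fin d) ℂ, N = Bᴴ * B :=
    ⟨psdSqrt hN, by rw [(psdSqrt_psd hN).1.eq, psdSqrt_mul_self]⟩
  rw [traceBB]
  refine ⟨by simp, ?_⟩
  simp only [Complex.ofReal_re]
  exact Finset.sum_nonneg fun j _ => Finset.sum_nonneg fun i _ => Complex.normSq_nonneg _

lemma psd_trace_zero {N : Matrix (Fin d) (Fin d) ℂ} (hN : N.PosSemidef)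
    (h : Matrix.trace N = 0) : N = 0 := by
  obtain ⟨B, rfl⟩ : ∃ B : Matrix (Fin d) (Fin d) ℂ, N = Bᴴ * B :=
    ⟨psdSqrt hN, by rw [(psdSqrt_psd hN).1.eq, psdSqrt_mul_self]⟩
  rw [traceBB] at h
  norm_cast at h
  have hB : B = 0 := by
    ext i j
    have h1 : ∀ j ∈ Finset.univ, ∀ i ∈ Finset.univ, Complex.normSq (B i j) = 0 := by
      have := (Finset.sum_eq_zero_iff_of_nonneg
        (fun j _ => Finset.sum_nonneg fun i _ => Complex.normSq_nonneg _)).mp h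
      intro j hj i hi
      exact (Finset.sum_eq_zero_iff_of_nonneg (fun i _ => Complex.normSq_nonneg _)).mp
        (this j hj) i hi
    simpa using Complex.normSq_eq_zero.mp (h1 j (by simp) i (by simp))
  rw [hB]; simp


lemma sqrt_det_isUnit {ρ : Matrix (Fin d) (Fin d) ℂ} (hρ : ρ.PosDef) :
    IsUnit (psdSqrt hρ.posSemidef).det := by
  have h := psdSqrt_mul_self hρ.posSemidef
  have hd : (psdSqrt hρ.posSemidef).det * (psdSqrt hρ.posSemidef).det = ρ.det := by
    rw [← det_mul, h]
  have : ρ.det ≠ 0 := ne_of_gt hρ.det_pos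
  refine isUnit_iff_ne_zero.mpr fun h0 => this ?_
  rw [← hd, h0, mul_zero]

lemma trace_rho_mul {ρ M : Matrix (Fin d) (Fin d) ℂ} (hρ : ρ.PosDef) (hM : M.PosSemidef) :
    Matrix.trace (ρ * M) = ((Matrix.trace (ρ * M)).re : ℂ) ∧ 0 ≤ (Matrix.trace (ρ * M)).re ∧
      (Matrix.trace (ρ * M) = 0 → M = 0) := by
  set S := psdSqrt hρ.posSemidef with hS
  have hSpsd : S.PosSemidef := psdSqrt_psd hρ.posSemidef
  have hSH : Sᴴ = S := hSpsd.1
  have hSS : S * S = ρ := psdSqrt_mul_self hρ.posSemidef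
  have hN : (S * M * S).PosSemidef := by
    have := hM.mul_mul_conjTranspose_same S
    rwa [hSH] at this
  have htr : Matrix.trace (ρ * M) = Matrix.trace (S * M * S) := by
    rw [← hSS, mul_assoc, Matrix.trace_mul_comm S (S * M), mul_assoc]
  constructor
  · rw [htr]; exact (psd_trace_re hN).1
  constructor
  · rw [htr]; exact (psd_trace_re hN).2
  · intro h0
    have hNz : S * M * S = 0 := psd_trace_zero hN (htr ▸ h0)
    have hdet := sqrt_det_isUnit hρ
    have : S⁻¹ * (S * M * S) * S⁻¹ = M := by
      rw [← mul_assoc, ← mul_assoc, nonsing_inv_mul S hdet, one_mul, mul_assoc,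
        mul_nonsing_inv S hdet, mul_one]
    rw [← this, hNz, mul_zero, zero_mul]


lemma key_main {A : Matrix (Fin d) (Fin d) ℂ} (hA : A.PosSemidef) (h0 : A ≠ 0) :
    (((Matrix.trace A).re : ℂ) • A - A * A).PosSemidef ∧
    ((((Matrix.trace A).re : ℂ) • A - A * A = 0) ↔ A.rank = 1) ∧
    Matrix.trace A = ((Matrix.trace A).re : ℂ) ∧ 0 < (Matrix.trace A).re := by
  classical
  have hH := hA.1
  set U : Matrix (Fin d) (Fin d) ℂ := (hH.eigenvectorUnitary : Matrix (Fin d) (Fin d) ℂ) with hU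
  set ev := hH.eigenvalues with hev
  have hUstar : star U * U = 1 := Unitary.coe_star_mul_self _
  have hUstar' : U * star U = 1 := Unitary.coe_mul_star_self _
  have hspec : A = U * diagonal (RCLike.ofReal ∘ ev) * star U := by
    have := hH.spectral_theorem; rwa [Unitary.conjStarAlgAut_apply] at this
  set r : ℝ := ∑ i, ev i with hr
  have htrA : Matrix.trace A = (r : ℂ) := by
    rw [hspec, Matrix.trace_mul_comm, ← mul_assoc, hUstar, one_mul, trace_diagonal]
    push_cast [hr]
    rfl
  have hre : (Matrix.trace A).re = r := by rw [htrA]; simp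
  have hevnn : ∀ i, 0 ≤ ev i := hA.eigenvalues_nonneg
  have hevle : ∀ i, ev i ≤ r := fun i =>
    Finset.single_le_sum (fun j _ => hevnn j) (Finset.mem_univ i)
  have hevne : ev ≠ 0 := by
    intro hz
    apply h0
    rw [hspec, hz]
    simp [Function.comp_def]
  obtain ⟨i0, hi0⟩ := Function.ne_iff.mp hevne
  have hi0' : ev i0 ≠ 0 := by simpa using hi0
  have hrpos : 0 < r := lt_of_lt_of_le (lt_of_le_of_ne (hevnn i0) (Ne.symm hi0')) (hevle i0)
  have hAA : A * A = U * diagonal (fun i => (((ev i)^2 : ℝ) : ℂ)) * star U := by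
    conv_lhs => rw [hspec]
    simp only [Matrix.mul_assoc]
    rw [show star U * (U * (diagonal (RCLike.ofReal ∘ ev) * star U))
        = (star U * U) * (diagonal (RCLike.ofReal ∘ ev) * star U) from
      (Matrix.mul_assoc _ _ _).symm, hUstar, Matrix.one_mul,
      ← Matrix.mul_assoc (diagonal _), diagonal_mul_diagonal]
    simp only [← Matrix.mul_assoc]
    congr 2
    ext i
    simp [Function.comp, sq]
  have hN : ((Matrix.trace A).re : ℂ) • A - A * A
      = U * diagonal (fun i => ((ev i * (r - ev i) : ℝ) : ℂ)) * star U := by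
    rw [hre, hAA]
    conv_lhs => rw [hspec]
    rw [show (r:ℂ) • (U * diagonal (RCLike.ofReal ∘ ev) * star U)
        = U * ((r:ℂ) • diagonal (RCLike.ofReal ∘ ev)) * star U by
      simp only [Matrix.mul_smul, Matrix.smul_mul]]
    rw [← Matrix.sub_mul, ← Matrix.mul_sub]
    congr 2
    ext i j
    by_cases hij : i = j
    · subst hij
      simp [diagonal_apply_eq, Function.comp]
      push_cast
      ring
    · simp [diagonal_apply_ne _ hij]
  have hgnn : ∀ i, (0:ℂ) ≤ ((ev i * (r - ev i) : ℝ) : ℂ) := fun i => by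
    rw [Complex.zero_le_real]
    exact mul_nonneg (hevnn i) (sub_nonneg.mpr (hevle i))
  have hNpsd : (((Matrix.trace A).re : ℂ) • A - A * A).PosSemidef := by
    rw [hN]
    have := (posSemidef_diagonal_iff.mpr hgnn).mul_mul_conjTranspose_same U
    rwa [← Matrix.star_eq_conjTranspose] at this
  refine ⟨hNpsd, ?_, by rw [hre]; exact htrA, by rw [hre]; exact hrpos⟩
  have hdiag : (((Matrix.trace A).re : ℂ) • A - A * A = 0) ↔ ∀ i, ev i * (r - ev i) = 0 := by
    rw [hN]
    constructor
    · intro h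
      have h2 : star U * (U * diagonal (fun i => ((ev i * (r - ev i) : ℝ) : ℂ)) * star U) * U
          = diagonal (fun i => ((ev i * (r - ev i) : ℝ) : ℂ)) := by
        simp only [Matrix.mul_assoc, hUstar, Matrix.mul_one]
        rw [← Matrix.mul_assoc, hUstar, Matrix.one_mul]
      intro i
      have h3 : diagonal (fun i => ((ev i * (r - ev i) : ℝ) : ℂ)) = 0 := by
        rw [← h2, h]
        simp
      exact_mod_cast (show ((ev i * (r - ev i) : ℝ) : ℂ) = 0 by
        simpa using congrFun (congrFun h3 i) i)
    · intro h
      have : (fun i => ((ev i * (r - ev i) : ℝ) : ℂ)) = fun _ => (0:ℂ) := by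
        ext i; rw [h i]; simp
      rw [this]
      simp
  rw [hdiag, hH.rank_eq_card_non_zero_eigs, Fintype.card_subtype]
  set s := Finset.univ.filter (fun i => ev i ≠ 0) with hs
  have hsum : ∑ i ∈ s, ev i = r := Finset.sum_filter_ne_zero _
  constructor
  · intro h
    have hall : ∀ i ∈ s, ev i = r := by
      intro i hi
      rcases mul_eq_zero.mp (h i) with h1 | h1
      · exact absurd h1 (Finset.mem_filter.mp hi).2
      · linarith [sub_eq_zero.mp h1]
    have hcr : (s.card : ℝ) * r = r := by
      have h5 : ∑ i ∈ s, ev i = (s.card : ℝ) * r := by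
        rw [Finset.sum_congr rfl hall, Finset.sum_const, nsmul_eq_mul]
      rw [← h5, hsum]
    have hc : (s.card : ℝ) = 1 := by
      have h1 : ((s.card : ℝ) - 1) * r = 0 := by rw [sub_mul, one_mul, hcr, sub_self]
      rcases mul_eq_zero.mp h1 with h2 | h2
      · exact sub_eq_zero.mp h2
      · exact absurd h2 (ne_of_gt hrpos)
    exact_mod_cast hc
  · intro h
    obtain ⟨j, hj⟩ := Finset.card_eq_one.mp h
    have hrj : ev j = r := by
      rw [← hsum, hj, Finset.sum_singleton]
    intro i
    by_cases hiz : ev i = 0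
    · rw [hiz]; ring
    · have hmem : i ∈ s := Finset.mem_filter.mpr ⟨Finset.mem_univ i, hiz⟩
      rw [hj, Finset.mem_singleton] at hmem
      rw [hmem, hrj]
      ring


lemma trace_outer (E : Matrix (Fin d) (Fin d) ℂ) :
    Matrix.trace (outerProd E E) = Matrix.trace (E * Eᴴ) := by
  simp [outerProd, Matrix.trace, Matrix.diag, Matrix.mul_apply, conjTranspose_apply,
    Fintype.sum_prod_type]

lemma trace_term {ρ : Matrix (Fin d) (Fin d) ℂ} (hρ : ρ.PosDef)
    {B : Matrix (Fin d) (Fin d) ℂ} (hB : B.IsHermitian) :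
    Matrix.trace ((psdSqrt hρ.posSemidef * B) * (psdSqrt hρ.posSemidef * B)ᴴ)
      = Matrix.trace (ρ * B * B) := by
  set S := psdSqrt hρ.posSemidef with hSdef
  have hSH : Sᴴ = S := (psdSqrt_psd hρ.posSemidef).1
  rw [conjTranspose_mul, hSH, hB.eq]
  have h1 : S * B * (B * S) = (S * (B * B)) * S := by simp only [Matrix.mul_assoc]
  rw [h1, Matrix.trace_mul_comm, ← Matrix.mul_assoc, psdSqrt_mul_self hρ.posSemidef,
    Matrix.mul_assoc]

lemma per_x {ρ A : Matrix (Fin d) (Fin d) ℂ} (hρ : ρ.PosDef) (hA : A.PosSemidef) (h0 : A ≠ 0) :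
    ∃ r c t : ℝ, Matrix.trace A = (r:ℂ) ∧ Matrix.trace (ρ * A) = (c:ℂ) ∧
      Matrix.trace (ρ * A * A) = (t:ℂ) ∧ 0 < c ∧ t ≤ r * c ∧ (t = r * c ↔ A.rank = 1) := by
  obtain ⟨hNpsd, heq, htrA, hrpos⟩ := key_main hA h0
  have hAApsd : (A * A).PosSemidef := by
    have := hA.pow 2; rwa [pow_two] at this
  have hcfact := trace_rho_mul hρ hA
  have htfact := trace_rho_mul hρ hAApsd
  set r : ℝ := (Matrix.trace A).re
  set c : ℝ := (Matrix.trace (ρ * A)).re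
  set t : ℝ := (Matrix.trace (ρ * (A * A))).re
  have hcpos : 0 < c := by
    rcases lt_or_eq_of_le hcfact.2.1 with h | h
    · exact h
    · exact absurd (hcfact.2.2 (by rw [hcfact.1, ← h]; simp)) h0
  have htrN : Matrix.trace (ρ * ((r : ℂ) • A - A * A)) = ((r * c - t : ℝ) : ℂ) := by
    rw [Matrix.mul_sub, Matrix.mul_smul, trace_sub, trace_smul, smul_eq_mul,
      hcfact.1, htfact.1]
    push_cast
    ring
  have hNfact := trace_rho_mul hρ hNpsd
  have hge : 0 ≤ r * c - t := by
    have h2 := hNfact.2.1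
    rw [htrN] at h2
    simpa using h2
  refine ⟨r, c, t, htrA, hcfact.1, by rw [Matrix.mul_assoc]; exact htfact.1, hcpos,
    by linarith, ?_⟩
  constructor
  · intro h
    apply heq.mp
    apply hNfact.2.2
    rw [htrN, h]
    simp
  · intro h
    have hN0 := heq.mpr h
    have : Matrix.trace (ρ * ((r : ℂ) • A - A * A)) = 0 := by rw [hN0, mul_zero, trace_zero]
    rw [htrN] at this
    have : r * c - t = 0 := by exact_mod_cast this
    linarith

end Stmt6Helpers
/-- Upper bound d on the trace of the generalized Fisher information matrix,
with equality iff the measurement is rank-1. -/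
theorem stmt6 {d n : ℕ} {ρ : Matrix (Fin d) (Fin d) ℂ} (hρ : ρ.PosDef)
    (hρtr : Matrix.trace ρ = 1)
    (A : Fin n → Matrix (Fin d) (Fin d) ℂ) (hA : IsMeasurement A) (hA0 : ∀ x, A x ≠ 0)
    (T : ℝ) (hT : (T : ℂ) = ∑ x, Matrix.trace (ρ * A x * A x) / Matrix.trace (ρ * A x)) :
    Matrix.trace (FisherRho hρ A) = (T : ℂ) ∧ T ≤ (d : ℝ) ∧
      (T = (d : ℝ) ↔ ∀ x, (A x).rank = 1) := by
  obtain ⟨hpsd, hsum1⟩ := hA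
  choose r c t hr hc ht hcpos hineq hiff using fun x => per_x hρ (hpsd x) (hA0 x)
  -- Part 1
  have h1 : Matrix.trace (FisherRho hρ A) = (T : ℂ) := by
    rw [FisherRho, trace_sum, hT]
    refine Finset.sum_congr rfl fun x _ => ?_
    rw [trace_smul, trace_outer, trace_term hρ (hpsd x).1, smul_eq_mul, inv_mul_eq_div]
  -- T as real sum
  have hTreal : T = ∑ x, t x / c x := by
    have : (T : ℂ) = ((∑ x, t x / c x : ℝ) : ℂ) := by
      rw [hT]
      push_cast
      refine Finset.sum_congr rfl fun x _ => ?_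
      rw [ht x, hc x]
    exact_mod_cast this
  -- sum of r equals d
  have hrd : ∑ x, r x = (d : ℝ) := by
    have h2 : ∑ x, Matrix.trace (A x) = (d : ℂ) := by
      rw [← trace_sum, hsum1, trace_one]
      simp
    have h3 : ((∑ x, r x : ℝ) : ℂ) = ((d : ℝ) : ℂ) := by
      push_cast
      rw [← h2]
      exact (Finset.sum_congr rfl fun x _ => (hr x).symm)
    exact_mod_cast h3
  have hle : ∀ x ∈ Finset.univ, t x / c x ≤ r x := fun x _ =>
    (div_le_iff₀ (hcpos x)).mpr (by linarith [hineq x])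
  refine ⟨h1, ?_, ?_⟩
  · rw [hTreal, ← hrd]
    exact Finset.sum_le_sum hle
  · rw [hTreal, ← hrd]
    rw [Finset.sum_eq_sum_iff_of_le hle]
    constructor
    · intro h x
      have h4 := h x (Finset.mem_univ x)
      rw [div_eq_iff (ne_of_gt (hcpos x))] at h4
      exact (hiff x).mp h4
    · intro h x _
      rw [div_eq_iff (ne_of_gt (hcpos x))]
      exact (hiff x).mpr (h x)
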